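/- arXiv:1809.00865 — 2 statements merged into one kernel-verified Lean document; each statement's English description precedes it below -/
import Mathlib

section
/- Let k be a field, P a prime ideal in k[x_1,...,x_n], and C ⊆ {x_1,...,x_n} a set of variables such that P ∩ k[C] ≠ ⟨0⟩ but P ∩ k[C'] = ⟨0⟩ for every proper subset C' ⊊ C. Then the ideal P ∩ k[C] of k[C] is principal, generated by an irreducible polynomial f_C, and every variable of C appears in f_C. -/
open MvPolynomial

section Helpers

variable {R : Type*} [CommRing R] {σ : Type*} [DecidableEq σ]

/-- Splitting off one variable of a multivariate polynomial ring. -/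
noncomputable def varSplit (R : Type*) [CommRing R] {σ : Type*} [DecidableEq σ] (x : σ) :
    MvPolynomial σ R ≃ₐ[R] Polynomial (MvPolynomial {b : σ // b ≠ x} R) :=
  (renameEquiv R (Equiv.optionSubtypeNe x).symm).trans (optionEquivLeft R {b : σ // b ≠ x})

theorem optionEquivLeft_rename_some {τ : Type*} (q : MvPolynomial τ R) :
    optionEquivLeft R τ (rename some q) = Polynomial.C q := by
  induction q using MvPolynomial.induction_on with
  | C a => simp [optionEquivLeft_C]
  | add p q hp hq => simp [map_add, hp, hq]
  | mul_X p i hp => simp [map_mul, hp, optionEquivLeft_X_some]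

theorem varSplit_rename_coe (x : σ) (q : MvPolynomial {b : σ // b ≠ x} R) :
    varSplit R x (rename (Subtype.val : {b : σ // b ≠ x} → σ) q) = Polynomial.C q := by
  have : ((Equiv.optionSubtypeNe x).symm ∘ (Subtype.val : {b : σ // b ≠ x} → σ)) = some := by
    funext b
    simp [Equiv.optionSubtypeNe_symm_of_ne b.prop]
  simp only [varSplit, AlgEquiv.trans_apply, renameEquiv_apply, rename_rename, this]
  exact optionEquivLeft_rename_some q

omit [DecidableEq σ] in
theorem not_mem_vars_iff_exists_rename (x : σ) (p : MvPolynomial σ R) :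
    x ∉ p.vars ↔ ∃ q : MvPolynomial {b : σ // b ≠ x} R,
      rename (Subtype.val : {b : σ // b ≠ x} → σ) q = p := by
  constructor
  · intro hx
    have hp : p ∈ supported R {b : σ | b ≠ x} := by
      rw [mem_supported]
      intro b hb
      rintro rfl
      exact hx (Finset.mem_coe.mp hb)
    rw [supported_eq_range_rename, AlgHom.mem_range] at hp
    exact hp
  · rintro ⟨q, rfl⟩
    intro hx
    obtain ⟨b, _, hb⟩ := mem_vars_rename _ _ hx
    exact b.prop hb

theorem not_mem_vars_iff_natDegree_varSplit_eq_zero (x : σ) (p : MvPolynomial σ R) :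
    x ∉ p.vars ↔ (varSplit R x p).natDegree = 0 := by
  constructor
  · intro hx
    obtain ⟨q, rfl⟩ := (not_mem_vars_iff_exists_rename x p).mp hx
    rw [varSplit_rename_coe]
    exact Polynomial.natDegree_C q
  · intro h
    obtain ⟨c, hc⟩ := Polynomial.natDegree_eq_zero.mp h
    rw [not_mem_vars_iff_exists_rename]
    refine ⟨c, (varSplit R x).injective ?_⟩
    rw [varSplit_rename_coe, hc]

theorem not_mem_vars_of_dvd [IsDomain R] {x : σ} {u w : MvPolynomial σ R}
    (hdvd : u ∣ w) (hw : w ≠ 0) (hx : x ∉ w.vars) : x ∉ u.vars := by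
  obtain ⟨v, rfl⟩ := hdvd
  have hu : u ≠ 0 := fun h => hw (by simp [h])
  have hv : v ≠ 0 := fun h => hw (by simp [h])
  rw [not_mem_vars_iff_natDegree_varSplit_eq_zero] at hx ⊢
  rw [map_mul] at hx
  have hu' : varSplit R x u ≠ 0 := fun h => hu ((map_eq_zero_iff _ (varSplit R x).injective).mp h)
  have hv' : varSplit R x v ≠ 0 := fun h => hv ((map_eq_zero_iff _ (varSplit R x).injective).mp h)
  rw [Polynomial.natDegree_mul hu' hv'] at hx
  omega

theorem mem_supported_of_dvd [IsDomain R] {C : Set σ} {u w : MvPolynomial σ R}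
    (hdvd : u ∣ w) (hw : w ≠ 0) (hws : w ∈ supported R C) : u ∈ supported R C := by
  rw [mem_supported] at hws ⊢
  intro i hi
  by_contra hiC
  have hiw : i ∉ w.vars := fun h => hiC (hws h)
  exact not_mem_vars_of_dvd hdvd hw hiw hi

end Helpers

/-- If `P` is a prime ideal of `k[x_1,…,x_n]` and `C` is a set of variables
with `P ∩ k[C] ≠ ⟨0⟩` but `P ∩ k[C'] = ⟨0⟩` for all proper subsets `C' ⊊ C`, then
`P ∩ k[C]` is principal, generated by an irreducible polynomial `f_C` whose support
is all of `C`. -/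
theorem circuit_polynomial {k : Type*} [Field k] {n : ℕ}
    (P : Ideal (MvPolynomial (Fin n) k)) (hP : P.IsPrime) (C : Set (Fin n))
    (hdep : ∃ f, f ∈ P ∧ f ∈ MvPolynomial.supported k C ∧ f ≠ 0)
    (hmin : ∀ C' ⊂ C, ∀ f ∈ P, f ∈ MvPolynomial.supported k C' → f = 0) :
    ∃ fC : MvPolynomial (Fin n) k,
      fC ∈ P ∧ fC ∈ MvPolynomial.supported k C ∧ Irreducible fC ∧ (↑fC.vars : Set (Fin n)) = C ∧
      ∀ g ∈ P, g ∈ MvPolynomial.supported k C →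
        ∃ h ∈ MvPolynomial.supported k C, g = fC * h := by
  classical
  obtain ⟨f, hfP, hfC, hf0⟩ := hdep
  set ι : MvPolynomial ↥C k →ₐ[k] MvPolynomial (Fin n) k :=
    rename (Subtype.val : ↥C → Fin n) with hι
  have hιinj : Function.Injective ι := rename_injective _ Subtype.val_injective
  have hrange : ∀ g, g ∈ MvPolynomial.supported k C → ∃ g', ι g' = g := by
    intro g hg
    rw [supported_eq_range_rename, AlgHom.mem_range] at hg
    exact hg
  have hιsupp : ∀ m : MvPolynomial ↥C k, ι m ∈ MvPolynomial.supported k C := by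
    intro m
    rw [supported_eq_range_rename, AlgHom.mem_range]
    exact ⟨m, rfl⟩
  set Q : Ideal (MvPolynomial ↥C k) := P.comap ι with hQ
  haveI hQp : Q.IsPrime := Ideal.IsPrime.comap (hK := hP) ι
  obtain ⟨f', hf'⟩ := hrange f hfC
  have hf'0 : f' ≠ 0 := fun h => hf0 (by rw [← hf', h, map_zero])
  have hf'Q : f' ∈ Q := by rw [hQ, Ideal.mem_comap, hf']; exact hfP
  -- find an irreducible element of Q
  have hprod : (UniqueFactorizationMonoid.factors f').prod ∈ Q := by
    obtain ⟨u, hu⟩ := UniqueFactorizationMonoid.factors_prod hf'0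
    have : (UniqueFactorizationMonoid.factors f').prod = f' * ↑u⁻¹ := by
      exact (Units.eq_mul_inv_iff_mul_eq u).mpr hu
    rw [this]
    exact Ideal.mul_mem_right _ _ hf'Q
  obtain ⟨q, hq_mem, hqQ⟩ := (hQp.multiset_prod_mem_iff_exists_mem _).mp hprod
  have hq_irr : Irreducible q := UniqueFactorizationMonoid.irreducible_of_factor q hq_mem
  have hq0 : q ≠ 0 := hq_irr.ne_zero
  set fC := ι q with hfCdef
  have hfCP : fC ∈ P := hqQ
  have hfCsupp : fC ∈ MvPolynomial.supported k C := hιsupp q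
  have hfC0 : fC ≠ 0 := fun h => hq0 (hιinj (by simp only [map_zero]; exact h))
  -- fC is irreducible in the big ring
  have hirr : Irreducible fC := by
    constructor
    · intro hu
      obtain ⟨w, hw⟩ := isUnit_iff_exists_inv.mp hu
      have hwsupp : w ∈ MvPolynomial.supported k C := by
        refine mem_supported_of_dvd ⟨fC, by rw [mul_comm, hw]⟩ one_ne_zero ?_
        exact Subalgebra.one_mem _
      obtain ⟨w', hw'⟩ := hrange w hwsupp
      have : q * w' = 1 := hιinj (by rw [map_mul, map_one, hw', hw])
      exact hq_irr.not_isUnit (isUnit_iff_exists_inv.mpr ⟨w', this⟩)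
    · intro u v huv
      have hus : u ∈ MvPolynomial.supported k C :=
        mem_supported_of_dvd ⟨v, huv⟩ hfC0 hfCsupp
      have hvs : v ∈ MvPolynomial.supported k C :=
        mem_supported_of_dvd ⟨u, by rw [mul_comm]; exact huv⟩ hfC0 hfCsupp
      obtain ⟨u', hu'⟩ := hrange u hus
      obtain ⟨v', hv'⟩ := hrange v hvs
      have : q = u' * v' := hιinj (by rw [map_mul, hu', hv', ← huv])
      rcases hq_irr.isUnit_or_isUnit this with h | h
      · exact Or.inl (hu' ▸ h.map ι)
      · exact Or.inr (hv' ▸ h.map ι)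
  -- the variables of fC are exactly C
  have hsub : (↑fC.vars : Set (Fin n)) ⊆ C := mem_supported.mp hfCsupp
  have hvars : (↑fC.vars : Set (Fin n)) = C := by
    by_contra hne
    have hss : (↑fC.vars : Set (Fin n)) ⊂ C := hsub.ssubset_of_ne hne
    exact hfC0 (hmin _ hss fC hfCP (mem_supported_vars fC))
  -- C is nonempty
  have hCne : C.Nonempty := by
    rcases Set.eq_empty_or_nonempty C with h | h
    · exfalso
      rw [h, supported_empty, Algebra.mem_bot] at hfCsupp
      obtain ⟨c, hc⟩ := hfCsupp
      have hc0 : c ≠ 0 := fun h0 => hfC0 (by rw [← hc, h0, map_zero])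
      exact hirr.not_isUnit (by rw [← hc]; exact (IsUnit.mk0 c hc0).map _)
    · exact h
  obtain ⟨x0, hx0⟩ := hCne
  set x : ↥C := ⟨x0, hx0⟩ with hx
  -- elements renamed from variables other than x give contradictions with hmin
  have hCssub : C \ {x0} ⊂ C := Set.sdiff_singleton_ssubset.mpr hx0
  have hren_supp : ∀ d : MvPolynomial {b : ↥C // b ≠ x} k,
      ι (rename (Subtype.val : {b : ↥C // b ≠ x} → ↥C) d) ∈
        MvPolynomial.supported k (C \ {x0}) := by
    intro d
    rw [hι, mem_supported]
    intro i hi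
    rw [rename_rename] at hi
    obtain ⟨b, _, hb⟩ := mem_vars_rename _ _ (Finset.mem_coe.mp hi)
    refine ⟨hb ▸ (b.1).2, ?_⟩
    intro hc
    rw [Set.mem_singleton_iff] at hc
    subst hc
    exact b.prop (Subtype.val_injective hb)
  -- main divisibility claim
  have key : ∀ g' ∈ Q, q ∣ g' := by
    intro g' hg'
    by_cases hg'0 : g' = 0
    · rw [hg'0]; exact dvd_zero q
    by_contra hdvd
    set S := MvPolynomial {b : ↥C // b ≠ x} k with hS
    letI : NormalizationMonoid S := (UniqueFactorizationMonoid.normalizationMonoid : StrongNormalizationMonoid S).toNormalizationMonoid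
    letI : NormalizedGCDMonoid S := UniqueFactorizationMonoid.toNormalizedGCDMonoid S
    set K := FractionRing S with hK
    set Φ := varSplit k x with hΦ
    set p := Φ q with hpdef
    set gP := Φ g' with hgPdef
    have hp0 : p ≠ 0 := fun h => hq0 ((map_eq_zero_iff _ Φ.injective).mp h)
    have hgP0 : gP ≠ 0 := fun h => hg'0 ((map_eq_zero_iff _ Φ.injective).mp h)
    have hp_irr : Irreducible p := (MulEquiv.irreducible_iff Φ).mpr hq_irr
    have hpdeg : p.natDegree ≠ 0 := by
      intro h
      have hxq : x ∉ q.vars := (not_mem_vars_iff_natDegree_varSplit_eq_zero x q).mpr h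
      obtain ⟨q₀, hq₀⟩ := (not_mem_vars_iff_exists_rename x q).mp hxq
      have hsupp := hren_supp q₀
      rw [hq₀] at hsupp
      exact hfC0 (hmin _ hCssub fC hfCP hsupp)
    have hp_prim : p.IsPrimitive := by
      intro r hr
      obtain ⟨t, ht⟩ := hr
      rcases hp_irr.isUnit_or_isUnit ht with h | h
      · exact Polynomial.isUnit_C.mp h
      · exfalso
        apply hpdeg
        have hle : p.natDegree ≤ 0 := by
          rw [ht]
          refine Polynomial.natDegree_mul_le.trans ?_
          simp [Polynomial.natDegree_eq_zero_of_isUnit h]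
        omega
    have hp'_irr : Irreducible (p.map (algebraMap S K)) :=
      hp_prim.irreducible_iff_irreducible_map_fraction_map.mp hp_irr
    have hpgP : ¬ p ∣ gP := by
      intro hd
      apply hdvd
      obtain ⟨t, ht⟩ := hd
      refine ⟨Φ.symm t, ?_⟩
      apply Φ.injective
      rw [map_mul, AlgEquiv.apply_symm_apply]
      exact ht
    have hnotdvd' : ¬ p.map (algebraMap S K) ∣ gP.map (algebraMap S K) := by
      intro hd
      apply hpgP
      have h1 : gP = Polynomial.C gP.content * gP.primPart := gP.eq_C_content_mul_primPart
      have hc0 : gP.content ≠ 0 := fun h => hgP0 (Polynomial.content_eq_zero_iff.mp h)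
      have hcK : algebraMap S K gP.content ≠ 0 :=
        fun h => hc0 ((map_eq_zero_iff _ (IsFractionRing.injective S K)).mp h)
      have hu : IsUnit (Polynomial.C (algebraMap S K gP.content)) :=
        Polynomial.isUnit_C.mpr (isUnit_iff_ne_zero.mpr hcK)
      have hd2 : p.map (algebraMap S K) ∣ (gP.primPart).map (algebraMap S K) := by
        rw [h1, Polynomial.map_mul, Polynomial.map_C] at hd
        exact (hu.dvd_mul_left).mp hd
      have h3 : p ∣ gP.primPart :=
        hp_prim.dvd_of_fraction_map_dvd_fraction_map hd2
      exact h3.trans ⟨Polynomial.C gP.content, by rw [mul_comm]; exact h1⟩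
    rcases EuclideanDomain.dvd_or_coprime (p.map (algebraMap S K)) (gP.map (algebraMap S K))
      hp'_irr with h | hco
    · exact hnotdvd' h
    obtain ⟨a, b, hab⟩ := hco
    obtain ⟨da, hda⟩ := IsLocalization.integerNormalization_map_to_map (nonZeroDivisors S) a
    obtain ⟨db, hdb⟩ := IsLocalization.integerNormalization_map_to_map (nonZeroDivisors S) b
    set A := IsLocalization.integerNormalization (nonZeroDivisors S) a with hA
    set B := IsLocalization.integerNormalization (nonZeroDivisors S) b with hB
    have heq : (Polynomial.C (db : S) * A) * p + (Polynomial.C (da : S) * B) * gP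
        = Polynomial.C ((da : S) * (db : S)) := by
      apply Polynomial.map_injective (algebraMap S K) (IsFractionRing.injective S K)
      rw [Polynomial.map_add, Polynomial.map_mul, Polynomial.map_mul, Polynomial.map_mul,
        Polynomial.map_mul, Polynomial.map_C, Polynomial.map_C, Polynomial.map_C, hda, hdb,
        Algebra.smul_def, Algebra.smul_def, Polynomial.algebraMap_apply,
        Polynomial.algebraMap_apply, map_mul, Polynomial.C_mul]
      linear_combination (Polynomial.C ((algebraMap S K) ↑da) *
        Polynomial.C ((algebraMap S K) ↑db)) * hab
    have hd0 : ((da : S) * (db : S)) ≠ 0 :=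
      mul_ne_zero (nonZeroDivisors.coe_ne_zero da) (nonZeroDivisors.coe_ne_zero db)
    have heq2 : (Φ.symm (Polynomial.C (db : S) * A)) * q + (Φ.symm (Polynomial.C (da : S) * B)) * g'
        = rename (Subtype.val : {b : ↥C // b ≠ x} → ↥C) ((da : S) * (db : S)) := by
      apply Φ.injective
      simp only [map_add, map_mul, AlgEquiv.apply_symm_apply]
      rw [show Φ ((rename (Subtype.val : {b : ↥C // b ≠ x} → ↥C)) ((da : S))) = Polynomial.C ((da : S))
            from varSplit_rename_coe x _,
          show Φ ((rename (Subtype.val : {b : ↥C // b ≠ x} → ↥C)) ((db : S))) = Polynomial.C ((db : S))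
            from varSplit_rename_coe x _,
          ← hpdef, ← hgPdef, heq, Polynomial.C_mul]
    have hwQ : rename (Subtype.val : {b : ↥C // b ≠ x} → ↥C) ((da : S) * (db : S)) ∈ Q := by
      rw [← heq2]
      exact Q.add_mem (Q.mul_mem_left _ hqQ) (Q.mul_mem_left _ hg')
    have hzero : ι (rename (Subtype.val : {b : ↥C // b ≠ x} → ↥C) ((da : S) * (db : S))) = 0 :=
      hmin _ hCssub _ hwQ (hren_supp _)
    apply hd0
    apply rename_injective (Subtype.val : {b : ↥C // b ≠ x} → ↥C) Subtype.val_injective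
    apply hιinj
    rw [hzero, map_zero, map_zero]
  refine ⟨fC, hfCP, hfCsupp, hirr, hvars, ?_⟩
  intro g hgP hgC
  obtain ⟨g', rfl⟩ := hrange g hgC
  have hg'Q : g' ∈ Q := by rw [hQ, Ideal.mem_comap]; exact hgP
  obtain ⟨h', hh'⟩ := key g' hg'Q
  exact ⟨ι h', hιsupp h', by rw [hh', map_mul]⟩
end

section
/- Let k be a field and P a prime ideal in k[x_1,...,x_n]. The collection C_P of minimal subsets C of variables with P ∩ k[C] ≠ ⟨0⟩ satisfies the circuit elimination axiom: if C_1, C_2 ∈ C_P are distinct and x ∈ C_1 ∩ C_2, then there exists C_3 ∈ C_P with C_3 ⊆ (C_1 ∪ C_2) \ {x}. -/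
set_option maxHeartbeats 1000000
set_option synthInstance.maxHeartbeats 400000

open MvPolynomial

section FieldLemmas

variable {k F : Type*} [Field k] [Field F] [Algebra k F]

theorem ai_insert_iff {s : Set F} (hs : AlgebraicIndependent k ((↑) : s → F))
    {z : F} (hz : z ∉ s) :
    AlgebraicIndependent k ((↑) : ↥(insert z s) → F) ↔
      Transcendental (Algebra.adjoin k s) z := by
  classical
  have h := hs.option_iff_transcendental z
  rw [Subtype.range_coe] at h
  rw [← h]
  rw [← algebraicIndependent_equiv' (Set.subtypeInsertEquivOption hz)
    (g := ((↑) : ↥(insert z s) → F))]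
  ext x
  by_cases hxz : ↑x = z <;> simp [hxz, Set.subtypeInsertEquivOption]

theorem isAlgebraic_field_adjoin_iff (s : Set F) (z : F) :
    IsAlgebraic (Algebra.adjoin k s) z ↔ IsAlgebraic (IntermediateField.adjoin k s) z := by
  classical
  set A := Algebra.adjoin k s with hA
  set E := IntermediateField.adjoin k s with hE
  have key := Algebra.adjoin_range_eq_range_aeval k (Subtype.val : s → F)
  rw [Subtype.range_coe] at key
  have hle : A ≤ E.toSubalgebra := IntermediateField.algebra_adjoin_le_adjoin k s
  letI : Algebra ↥A ↥E := (Subalgebra.inclusion hle).toRingHom.toAlgebra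
  have hcoe : ∀ a : ↥A, ((algebraMap ↥A ↥E a : ↥E) : F) = (a : F) := fun a => rfl
  haveI : IsScalarTower ↥A ↥E F := IsScalarTower.of_algebraMap_eq (fun a => rfl)
  haveI : IsFractionRing ↥A ↥E := by
    constructor
    constructor
    · rintro ⟨y, hy⟩
      have hy0 : (y : F) ≠ 0 := by
        intro h0
        exact (nonZeroDivisors.ne_zero hy) (Subtype.ext h0)
      refine isUnit_iff_ne_zero.mpr (fun h => hy0 ?_)
      have := congrArg (Subtype.val : ↥E → F) h
      rwa [hcoe] at this
    · rintro ⟨z, hz⟩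
      rw [hE, IntermediateField.mem_adjoin_iff] at hz
      obtain ⟨r, s', hrs⟩ := hz
      have hr : MvPolynomial.aeval (Subtype.val : s → F) r ∈ A := by
        rw [hA, key]; exact ⟨r, rfl⟩
      have hs' : MvPolynomial.aeval (Subtype.val : s → F) s' ∈ A := by
        rw [hA, key]; exact ⟨s', rfl⟩
      by_cases h0 : MvPolynomial.aeval (Subtype.val : s → F) s' = 0
      · refine ⟨⟨0, 1⟩, ?_⟩
        have : z = 0 := by rw [hrs, h0, div_zero]
        ext
        simp [this]
      · refine ⟨⟨⟨_, hr⟩, ⟨⟨_, hs'⟩, mem_nonZeroDivisors_of_ne_zero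
          (fun h => h0 (congrArg Subtype.val h))⟩⟩, ?_⟩
        ext
        show (z : F) * _ = _
        rw [hcoe, hcoe, hrs, div_mul_cancel₀ _ h0]
    · intro a b h
      have hab : (a : F) = (b : F) := by
        have := congrArg (Subtype.val : ↥E → F) h
        rwa [hcoe, hcoe] at this
      exact ⟨1, by simp [Subtype.ext hab]⟩
  exact (IsFractionRing.isAlgebraic_iff ↥A ↥E F)

theorem core_trans (s : Set F) (u v : F)
    (hu : IsAlgebraic (Algebra.adjoin k s) u)
    (hv : IsAlgebraic (Algebra.adjoin k (insert u s)) v) :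
    IsAlgebraic (Algebra.adjoin k s) v := by
  rw [isAlgebraic_field_adjoin_iff] at hu hv ⊢
  have hui : IsIntegral ↥(IntermediateField.adjoin k s) u := (isAlgebraic_iff_isIntegral).mp hu
  haveI : FiniteDimensional ↥(IntermediateField.adjoin k s)
      ↥(IntermediateField.adjoin ↥(IntermediateField.adjoin k s) {u}) :=
    IntermediateField.adjoin.finiteDimensional hui
  have hle : IntermediateField.adjoin k (insert u s) ≤
      (IntermediateField.adjoin ↥(IntermediateField.adjoin k s) {u}).restrictScalars k := by
    rw [IntermediateField.adjoin_le_iff, IntermediateField.coe_restrictScalars]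
    rintro w (rfl | hw)
    · exact IntermediateField.subset_adjoin _ _ rfl
    · exact (IntermediateField.adjoin ↥(IntermediateField.adjoin k s) {u}).algebraMap_mem
        ⟨w, IntermediateField.subset_adjoin k s hw⟩
  have hvT : IsAlgebraic
      ↥((IntermediateField.adjoin ↥(IntermediateField.adjoin k s) {u}).restrictScalars k) v :=
    hv.tower_top_of_subalgebra_le
      (show (IntermediateField.adjoin k (insert u s)).toSubalgebra ≤ _ from hle)
  have hvT2 : IsIntegral ↥(IntermediateField.adjoin ↥(IntermediateField.adjoin k s) {u}) v :=
    (isAlgebraic_iff_isIntegral).mp hvT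
  haveI : Algebra.IsIntegral ↥(IntermediateField.adjoin k s)
      ↥(IntermediateField.adjoin ↥(IntermediateField.adjoin k s) {u}) :=
    Algebra.IsIntegral.of_finite _ _
  exact (isIntegral_trans (R := ↥(IntermediateField.adjoin k s)) v hvT2).isAlgebraic

end FieldLemmas

/-- `S` is independent modulo `P`, i.e. `P ∩ k[S] = ⟨0⟩`. -/
def IndepModP {k : Type*} [Field k] {n : ℕ} (P : Ideal (MvPolynomial (Fin n) k))
    (S : Set (Fin n)) : Prop :=
  ∀ f ∈ P, f ∈ MvPolynomial.supported k S → f = 0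

/-- `C` is a circuit of the coordinate matroid of `P`: a minimal set of variables with
`P ∩ k[C] ≠ ⟨0⟩`. -/
def CircuitModP {k : Type*} [Field k] {n : ℕ} (P : Ideal (MvPolynomial (Fin n) k))
    (C : Set (Fin n)) : Prop :=
  ¬ IndepModP P C ∧ ∀ C' ⊂ C, IndepModP P C'

theorem indep_mono {k : Type*} [Field k] {n : ℕ} {P : Ideal (MvPolynomial (Fin n) k)}
    {S' S : Set (Fin n)} (h : S' ⊆ S) (hI : IndepModP P S) : IndepModP P S' :=
  fun f hf hs => hI f hf (supported_mono h hs)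

theorem exists_circuit {k : Type*} [Field k] {n : ℕ} {P : Ideal (MvPolynomial (Fin n) k)}
    {D : Set (Fin n)} (hD : ¬ IndepModP P D) : ∃ C, CircuitModP P C ∧ C ⊆ D := by
  classical
  set M : Set ℕ := {m | ∃ C, C ⊆ D ∧ ¬ IndepModP P C ∧ C.ncard = m} with hM
  have hne : M.Nonempty := ⟨D.ncard, D, subset_rfl, hD, rfl⟩
  obtain ⟨C, hCD, hCdep, hCcard⟩ := Nat.sInf_mem hne
  refine ⟨C, ⟨hCdep, ?_⟩, hCD⟩
  intro C' hC'
  by_contra hC'dep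
  have h1 : C'.ncard ∈ M := ⟨C', hC'.subset.trans hCD, hC'dep, rfl⟩
  have h2 : C'.ncard < C.ncard := Set.ncard_lt_ncard hC' (Set.toFinite C)
  have := Nat.sInf_le h1
  omega

section Aux

variable {k : Type*} [Field k] {n : ℕ} (P : Ideal (MvPolynomial (Fin n) k)) [P.IsPrime]

noncomputable def theA : Fin n → FractionRing (MvPolynomial (Fin n) k ⧸ P) :=
  fun i => algebraMap _ _ (Ideal.Quotient.mk P (X i))

theorem aeval_theA (f : MvPolynomial (Fin n) k) :
    aeval (theA P) f = algebraMap (MvPolynomial (Fin n) k ⧸ P) _ (Ideal.Quotient.mk P f) := by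
  have : (IsScalarTower.toAlgHom k (MvPolynomial (Fin n) k ⧸ P)
      (FractionRing (MvPolynomial (Fin n) k ⧸ P))).comp (Ideal.Quotient.mkₐ k P) =
      aeval (theA P) := by
    rw [aeval_unique (((IsScalarTower.toAlgHom k (MvPolynomial (Fin n) k ⧸ P)
      (FractionRing (MvPolynomial (Fin n) k ⧸ P))).comp (Ideal.Quotient.mkₐ k P)))]
    rfl
  rw [← this]
  rfl

theorem mem_P_iff (f : MvPolynomial (Fin n) k) : f ∈ P ↔ aeval (theA P) f = 0 := by
  rw [aeval_theA]
  rw [← map_zero (algebraMap (MvPolynomial (Fin n) k ⧸ P)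
      (FractionRing (MvPolynomial (Fin n) k ⧸ P)))]
  rw [(IsFractionRing.injective (MvPolynomial (Fin n) k ⧸ P)
      (FractionRing (MvPolynomial (Fin n) k ⧸ P))).eq_iff]
  exact Ideal.Quotient.eq_zero_iff_mem.symm

theorem indep_iff (S : Set (Fin n)) :
    IndepModP P S ↔ AlgebraicIndependent k (fun i : S => theA P i) := by
  rw [algebraicIndependent_iff]
  constructor
  · intro h g hg
    have h2 : aeval (theA P) (rename (Subtype.val : S → Fin n) g) = 0 := by
      rw [aeval_rename]; exact hg
    have h3 : rename (Subtype.val : S → Fin n) g ∈ MvPolynomial.supported k S := by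
      rw [supported_eq_range_rename]; exact ⟨g, rfl⟩
    have h4 := h _ ((mem_P_iff P _).mpr h2) h3
    exact (rename_injective _ Subtype.val_injective) (by rw [h4, map_zero])
  · intro h f hf hsup
    rw [supported_eq_range_rename] at hsup
    obtain ⟨g, rfl⟩ := hsup
    have h2 : aeval (fun i : S => theA P i) g = 0 := by
      show aeval ((theA P) ∘ (Subtype.val : S → Fin n)) g = 0
      rw [← aeval_rename]
      exact (mem_P_iff P _).mp hf
    rw [h g h2, map_zero]

-- family indep → InjOn
theorem injOn_theA {S : Set (Fin n)} (h : IndepModP P S) : Set.InjOn (theA P) S := by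
  have := ((indep_iff P S).mp h).injective
  exact Set.injOn_iff_injective.mpr this

-- set-level AI from IndepModP
theorem ai_image {S : Set (Fin n)} (h : IndepModP P S) :
    AlgebraicIndependent k ((↑) : ↥(theA P '' S) → FractionRing (MvPolynomial (Fin n) k ⧸ P)) :=
  ((indep_iff P S).mp h).image

theorem circuit_isAlgebraic {C : Set (Fin n)} (hC : CircuitModP P C) {z : Fin n} (hz : z ∈ C)
    {T : Set (Fin n)} (hT : C \ {z} ⊆ T) :
    IsAlgebraic (Algebra.adjoin k (theA P '' T)) (theA P z) := by
  classical
  have hCz : IndepModP P (C \ {z}) := hC.2 _ (Set.sdiff_singleton_ssubset.mpr hz)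
  have hAIs := ai_image P hCz
  have hbase : IsAlgebraic (Algebra.adjoin k (theA P '' (C \ {z}))) (theA P z) := by
    by_cases hmem : theA P z ∈ theA P '' (C \ {z})
    · exact isAlgebraic_algebraMap (⟨theA P z, Algebra.subset_adjoin hmem⟩ :
        Algebra.adjoin k (theA P '' (C \ {z})))
    · have hnotAI : ¬ AlgebraicIndependent k
          ((↑) : ↥(insert (theA P z) (theA P '' (C \ {z}))) →
            FractionRing (MvPolynomial (Fin n) k ⧸ P)) := by
        intro hAI
        apply hC.1
        rw [indep_iff]
        have hinj : Set.InjOn (theA P) C := by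
          have h1 : Set.InjOn (theA P) (C \ {z}) := injOn_theA P hCz
          have : C = insert z (C \ {z}) := by
            rw [Set.insert_diff_singleton, Set.insert_eq_self.mpr hz]
          rw [this]
          rw [Set.injOn_insert (fun h => h.2 rfl)]
          exact ⟨h1, hmem⟩
        rw [algebraicIndependent_image hinj]
        have himg : theA P '' C = insert (theA P z) (theA P '' (C \ {z})) := by
          conv_lhs => rw [show C = insert z (C \ {z}) by
            rw [Set.insert_diff_singleton, Set.insert_eq_self.mpr hz]]
          rw [Set.image_insert_eq]
        rw [himg]
        exact hAI
      have := (ai_insert_iff hAIs hmem).not.mp hnotAI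
      rwa [Transcendental, not_not] at this
  exact hbase.tower_top_of_subalgebra_le
    (Algebra.adjoin_mono (Set.image_mono hT))

end Aux

/-- The circuits of the coordinate matroid of a prime ideal satisfy the
circuit elimination axiom. -/
theorem circuit_elimination {k : Type*} [Field k] {n : ℕ}
    (P : Ideal (MvPolynomial (Fin n) k)) (hP : P.IsPrime)
    (C₁ C₂ : Set (Fin n)) (hC₁ : CircuitModP P C₁) (hC₂ : CircuitModP P C₂)
    (hne : C₁ ≠ C₂) (x : Fin n) (hx : x ∈ C₁ ∩ C₂) :
    ∃ C₃, CircuitModP P C₃ ∧ C₃ ⊆ (C₁ ∪ C₂) \ {x} := by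
  classical
  haveI := hP
  set D : Set (Fin n) := (C₁ ∪ C₂) \ {x} with hD
  suffices hdep : ¬ IndepModP P D by
    obtain ⟨C, hC, hCD⟩ := exists_circuit hdep
    exact ⟨C, hC, hCD⟩
  intro hInd
  -- pick y ∈ C₁ \ C₂
  have hnotsub : ¬ C₁ ⊆ C₂ := by
    intro hsub
    exact hC₁.1 (hC₂.2 C₁ (ssubset_of_subset_of_ne hsub hne))
  obtain ⟨y, hyC₁, hyC₂⟩ := Set.not_subset.mp hnotsub
  have hyx : y ≠ x := fun h => hyC₂ (h ▸ hx.2)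
  have hyD : y ∈ D := ⟨Or.inl hyC₁, hyx⟩
  set B : Set (Fin n) := D \ {y} with hB
  have hDB : D = insert y B := by
    rw [hB, Set.insert_diff_singleton, Set.insert_eq_self.mpr hyD]
  have hBind : IndepModP P B := indep_mono Set.diff_subset hInd
  have hAIB := ai_image P hBind
  -- x-fact
  have hC₂B : C₂ \ {x} ⊆ B := by
    rintro w ⟨hw, hwx⟩
    exact ⟨⟨Or.inr hw, hwx⟩, fun h => hyC₂ ((Set.mem_singleton_iff.mp h) ▸ hw)⟩
  have hax : IsAlgebraic (Algebra.adjoin k (theA P '' B)) (theA P x) :=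
    circuit_isAlgebraic P hC₂ hx.2 hC₂B
  -- y-fact
  have hC₁B : C₁ \ {y} ⊆ insert x B := by
    rintro w ⟨hw, hwy⟩
    by_cases hwx : w = x
    · exact Or.inl hwx
    · exact Or.inr ⟨⟨Or.inl hw, hwx⟩, hwy⟩
  have hay : IsAlgebraic (Algebra.adjoin k (insert (theA P x) (theA P '' B))) (theA P y) := by
    have := circuit_isAlgebraic P hC₁ hyC₁ hC₁B
    rwa [Set.image_insert_eq] at this
  have hfinal : IsAlgebraic (Algebra.adjoin k (theA P '' B)) (theA P y) :=
    core_trans _ _ _ hax hay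
  -- contradiction with transcendence of a_y over adjoin(a''B)
  have hinjD : Set.InjOn (theA P) D := injOn_theA P hInd
  have haynotin : theA P y ∉ theA P '' B := by
    rintro ⟨w, hwB, hw⟩
    exact hwB.2 (Set.mem_singleton_iff.mpr (hinjD hwB.1 hyD hw).symm ▸ rfl)
  have hAID : AlgebraicIndependent k
      ((↑) : ↥(insert (theA P y) (theA P '' B)) →
        FractionRing (MvPolynomial (Fin n) k ⧸ P)) := by
    have := ai_image P hInd
    rw [hDB, Set.image_insert_eq] at this
    exact this
  exact (ai_insert_iff hAIB haynotin).mp hAID hfinal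
end
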